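/- Let d ≥ 2 be an integer, 1 < α < 2, 0 < γ ≤ 2, and β > αγ/2. There exists a constant K' > 0, depending only on d, α, γ, β, such that for every nonnegative f ∈ C_c(ℝ^{d+1}) and every ρ > 0, ∫∫_{{(s,y) : s ≥ ρ^α, |y| ≤ s^{1/α}}} s^{γ/2 − d/α − 1} f(s,y) dy ds ≤ K' ρ^{αγ/2 − β} M_β f(0,0). -/

import Mathlib

open MeasureTheory ENNReal Set Filter

noncomputable section

/-- The spatial space `ℝ^d`. -/
abbrev Spc (d : ℕ) := EuclideanSpace ℝ (Fin d)

/-- Parabolic cylinder `C_ρ(t,x) = {(s,y) : t ≤ s ≤ t + ρ^α, |y - x| ≤ ρ}`. -/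
def cylP (d : ℕ) (α ρ t : ℝ) (x : Spc d) : Set (ℝ × Spc d) :=
  {p | t ≤ p.1 ∧ p.1 ≤ t + ρ ^ α ∧ dist p.2 x ≤ ρ}

/-- Average of `f` over the parabolic cylinder `C_ρ(t,x)`. -/
def cylAvg (d : ℕ) (α ρ t : ℝ) (x : Spc d) (f : ℝ × Spc d → ℝ≥0∞) : ℝ≥0∞ :=
  (volume (cylP d α ρ t x))⁻¹ * ∫⁻ p in cylP d α ρ t x, f p

/-- Parabolic Morrey norm `‖v‖_{E_q}`. -/
def morreyE (d : ℕ) (α q : ℝ) (v : ℝ × Spc d → ℝ≥0∞) : ℝ≥0∞ :=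
  ⨆ (ρ : ℝ) (_ : 0 < ρ) (t : ℝ) (x : Spc d),
    ENNReal.ofReal ρ * (cylAvg d α ρ t x (fun p => v p ^ q)) ^ (1 / q)

/-- Elliptic Morrey norm `‖w‖_{M_q}` on `ℝ^d`. -/
def morreyM (d : ℕ) (q : ℝ) (w : Spc d → ℝ≥0∞) : ℝ≥0∞ :=
  ⨆ (ρ : ℝ) (_ : 0 < ρ) (x : Spc d),
    ENNReal.ofReal ρ *
      ((volume (Metric.closedBall x ρ))⁻¹ *
        ∫⁻ y in Metric.closedBall x ρ, w y ^ q) ^ (1 / q)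

/-- Fractional (parabolic) maximal function `M_β f(t,x)`. -/
def maxFun (d : ℕ) (α β : ℝ) (f : ℝ × Spc d → ℝ≥0∞) (t : ℝ) (x : Spc d) : ℝ≥0∞ :=
  ⨆ (ρ : ℝ) (_ : 0 < ρ), ENNReal.ofReal (ρ ^ β) * cylAvg d α ρ t x f

/-- Uncentered parabolic maximal function `M̂ f(z)`, sup over all parabolic
cylinders containing `z`. -/
def hatM (d : ℕ) (α : ℝ) (f : ℝ × Spc d → ℝ≥0∞) (z : ℝ × Spc d) : ℝ≥0∞ :=
  ⨆ (ρ : ℝ) (_ : 0 < ρ) (t : ℝ) (x : Spc d) (_ : z ∈ cylP d α ρ t x),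
    cylAvg d α ρ t x f

/-- The kernel `p_γ(s,y) = 1_{s>0} s^{γ/2} min(|y|^{-d-α}, s^{-(d+α)/α})`. -/
def pKer (d : ℕ) (α γ : ℝ) (s : ℝ) (y : Spc d) : ℝ≥0∞ :=
  if 0 < s then
    (if s ^ (1 / α) ≤ ‖y‖ then ENNReal.ofReal (s ^ (γ / 2) * ‖y‖ ^ (-(d : ℝ) - α))
     else ENNReal.ofReal (s ^ (γ / 2 - ((d : ℝ) + α) / α)))
  else 0

/-- `P_γ f(t,x) = ∫ p_γ(s,y) f(t+s, x+y) dy ds`. -/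
def Pop (d : ℕ) (α γ : ℝ) (f : ℝ × Spc d → ℝ≥0∞) (t : ℝ) (x : Spc d) : ℝ≥0∞ :=
  ∫⁻ p : ℝ × Spc d, pKer d α γ p.1 p.2 * f (t + p.1, x + p.2)

/-- `P*_γ f(t,x) = ∫ p_γ(s,y) f(t-s, x+y) dy ds`. -/
def PopStar (d : ℕ) (α γ : ℝ) (f : ℝ × Spc d → ℝ≥0∞) (t : ℝ) (x : Spc d) : ℝ≥0∞ :=
  ∫⁻ p : ℝ × Spc d, pKer d α γ p.1 p.2 * f (t - p.1, x + p.2)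


/-- far-field estimate over the region `Q^c ∩ C_ρ(0,0)^c`, where
`Q^c = {(s,y) : |y| < s^{1/α}}`:
`∫∫_{s ≥ ρ^α, |y| ≤ s^{1/α}} s^{γ/2-d/α-1} f(s,y) dy ds ≤ K' ρ^{αγ/2-β} M_β f(0,0)`. -/
lemma lint_Ioi_rpow {c e : ℝ} (hc : 0 < c) (he : e < -1) :
    ∫⁻ u in Ioi c, ENNReal.ofReal (u ^ e) = ENNReal.ofReal (c ^ (e + 1) / (-(e + 1))) := by
  rw [← ofReal_integral_eq_lintegral_ofReal (integrableOn_Ioi_rpow_of_lt he hc)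
      ((ae_restrict_iff' measurableSet_Ioi).2 (ae_of_all _ fun u hu =>
        Real.rpow_nonneg (hc.trans hu).le e))]
  rw [integral_Ioi_rpow_of_lt he hc]
  congr 1
  rw [div_neg, neg_div]

lemma cyl_eq (d : ℕ) (α r : ℝ) :
    cylP d α r 0 0 = (Icc (0:ℝ) (r ^ α)) ×ˢ Metric.closedBall (0 : Spc d) r := by
  ext p
  simp [cylP, Set.mem_prod, Metric.mem_closedBall, and_assoc, mem_Icc]

lemma vol_cyl (d : ℕ) (α r : ℝ) (hr : 0 ≤ r) :
    volume (cylP d α r 0 0)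
      = ENNReal.ofReal (r ^ α) * (ENNReal.ofReal (r ^ d) * volume (Metric.ball (0 : Spc d) 1)) := by
  rw [cyl_eq, Measure.volume_eq_prod, Measure.prod_prod, Real.volume_Icc, sub_zero,
    Measure.addHaar_closedBall _ _ hr, finrank_euclideanSpace_fin]

theorem stmt_7 (d : ℕ) (hd : 2 ≤ d) (α γ β : ℝ) (hα1 : 1 < α) (hα2 : α < 2)
    (hγ1 : 0 < γ) (hγ2 : γ ≤ 2) (hβ : α * γ / 2 < β) :
    ∃ K' : ℝ, 0 < K' ∧
      ∀ (f : ℝ × Spc d → ℝ), Continuous f → HasCompactSupport f → (∀ z, 0 ≤ f z) →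
      ∀ (ρ : ℝ), 0 < ρ →
      (∫⁻ z in {z : ℝ × Spc d | ρ ^ α ≤ z.1 ∧ ‖z.2‖ ≤ z.1 ^ (1 / α)},
          ENNReal.ofReal (z.1 ^ (γ / 2 - d / α - 1) * f z)) ≤
        ENNReal.ofReal (K' * ρ ^ (α * γ / 2 - β)) *
          maxFun d α β (fun z => ENNReal.ofReal (f z)) 0 0 := by
  have hα0 : (0:ℝ) < α := by linarith
  have hd0 : (0:ℝ) < d := by
    have : (0:ℕ) < d := by omega
    exact_mod_cast this
  set a : ℝ := (d:ℝ) / α + 1 - γ / 2 with ha_def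
  have ha : 0 < a := by
    have h1 : (0:ℝ) < (d:ℝ) / α := div_pos hd0 hα0
    have h2 : γ / 2 ≤ 1 := by linarith
    simp only [ha_def]; linarith
  set V : ℝ≥0∞ := volume (Metric.ball (0 : Spc d) 1) with hV_def
  have hV0 : V ≠ 0 := (Metric.measure_ball_pos volume 0 one_pos).ne'
  have hVtop : V ≠ ∞ := measure_ball_lt_top.ne
  have hVt0 : 0 < V.toReal := ENNReal.toReal_pos hV0 hVtop
  have hba : γ / 2 < β / α := by
    rw [lt_div_iff₀ hα0]
    nlinarith
  refine ⟨a * V.toReal * (β / α - γ / 2)⁻¹, mul_pos (mul_pos ha hVt0) (inv_pos.2 (by linarith)), ?_⟩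
  intro f hfc hfs hf0 ρ hρ
  have hρα : 0 < ρ ^ α := Real.rpow_pos_of_pos hρ α
  set g : ℝ × Spc d → ℝ≥0∞ := fun z => ENNReal.ofReal (f z) with hg
  set M := maxFun d α β g 0 0 with hM
  have hgmeas : Measurable g := ENNReal.measurable_ofReal.comp hfc.measurable
  set S : Set (ℝ × Spc d) := {z | ρ ^ α ≤ z.1 ∧ ‖z.2‖ ≤ z.1 ^ (1 / α)} with hS_def
  have hSmeas : MeasurableSet S := by
    have h1 : MeasurableSet {z : ℝ × Spc d | ρ ^ α ≤ z.1} :=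
      measurableSet_le measurable_const measurable_fst
    have h2 : MeasurableSet {z : ℝ × Spc d | ‖z.2‖ ≤ z.1 ^ (1 / α)} :=
      measurableSet_le measurable_snd.norm (measurable_fst.pow_const (1 / α))
    exact h1.inter h2
  set h : ℝ → ℝ≥0∞ := fun u => ENNReal.ofReal (u ^ (-a - 1)) with hh
  have hhmeas : Measurable h := ENNReal.measurable_ofReal.comp (measurable_id.pow_const _)
  have key : ∀ s : ℝ, 0 < s →
      ENNReal.ofReal (s ^ (-a)) = ENNReal.ofReal a * ∫⁻ u in Ioi s, h u := by
    intro s hs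
    rw [hh]
    rw [lint_Ioi_rpow hs (by linarith : -a - 1 < -1)]
    rw [← ENNReal.ofReal_mul ha.le]
    congr 1
    have h1 : -a - 1 + 1 = -a := by ring
    rw [h1, neg_neg]
    field_simp
  set F : (ℝ × Spc d) → ℝ → ℝ≥0∞ := fun z u => S.indicator g z * (Ioi z.1).indicator h u
    with hF
  have hexp : γ / 2 - (d:ℝ) / α - 1 = -a := by simp only [ha_def]; ring
  -- step 1
  have step1 : (∫⁻ z in S, ENNReal.ofReal (z.1 ^ (γ / 2 - (d:ℝ) / α - 1) * f z))
      = ENNReal.ofReal a * ∫⁻ z, ∫⁻ u, F z u := by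
    have e1 : (∫⁻ z in S, ENNReal.ofReal (z.1 ^ (γ / 2 - (d:ℝ) / α - 1) * f z))
        = ∫⁻ z in S, ENNReal.ofReal a * (g z * ∫⁻ u, (Ioi z.1).indicator h u) := by
      apply setLIntegral_congr_fun hSmeas
      intro z hz
      beta_reduce
      have hz1 : 0 < z.1 := lt_of_lt_of_le hρα hz.1
      rw [hexp, ENNReal.ofReal_mul (Real.rpow_nonneg hz1.le _), key z.1 hz1,
        lintegral_indicator measurableSet_Ioi]
      ring
    rw [e1, lintegral_const_mul' _ _ ENNReal.ofReal_ne_top]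
    congr 1
    rw [← lintegral_indicator hSmeas]
    congr 1; funext z
    by_cases hz : z ∈ S
    · rw [indicator_of_mem hz, ← lintegral_const_mul' _ _ (show g z ≠ ∞ from ENNReal.ofReal_ne_top)]
      congr 1; funext u
      simp only [hF, indicator_of_mem hz]
    · rw [indicator_of_notMem hz]
      symm
      simp [hF, indicator_of_notMem hz]
  -- step 2 : Tonelli
  have step2 : (∫⁻ z, ∫⁻ u, F z u) = ∫⁻ u, ∫⁻ z, F z u := by
    apply lintegral_lintegral_swap
    apply Measurable.aemeasurable
    have m1 : Measurable fun p : (ℝ × Spc d) × ℝ => S.indicator g p.1 :=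
      (hgmeas.indicator hSmeas).comp measurable_fst
    have m2 : Measurable fun p : (ℝ × Spc d) × ℝ => (Ioi p.1.1).indicator h p.2 := by
      have he : (fun p : (ℝ × Spc d) × ℝ => (Ioi p.1.1).indicator h p.2)
          = {p : (ℝ × Spc d) × ℝ | p.1.1 < p.2}.indicator (fun p => h p.2) := by
        funext p; simp [Set.indicator_apply, mem_Ioi]
      rw [he]
      exact (hhmeas.comp measurable_snd).indicator
        (measurableSet_lt measurable_fst.fst measurable_snd)
    exact m1.mul m2
  -- cylinder bound
  have hcylmeas : ∀ r : ℝ, MeasurableSet (cylP d α r 0 0) := fun r => by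
    rw [cyl_eq]; exact measurableSet_Icc.prod Metric.isClosed_closedBall.measurableSet
  have hcylbound : ∀ r : ℝ, 0 < r →
      (∫⁻ z in cylP d α r 0 0, g z) ≤ ENNReal.ofReal (r ^ (α + (d:ℝ) - β)) * (V * M) := by
    intro r hr
    set W := volume (cylP d α r 0 0) with hW
    have hrα : (0:ℝ) < r ^ α := Real.rpow_pos_of_pos hr α
    have hW0 : W ≠ 0 := by
      rw [hW, vol_cyl d α r hr.le]
      exact mul_ne_zero (ENNReal.ofReal_pos.2 hrα).ne'
        (mul_ne_zero (ENNReal.ofReal_pos.2 (pow_pos hr d)).ne' hV0)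
    have hWtop : W ≠ ∞ := by
      rw [hW, vol_cyl d α r hr.le]
      exact ENNReal.mul_ne_top ENNReal.ofReal_ne_top
        (ENNReal.mul_ne_top ENNReal.ofReal_ne_top hVtop)
    have h1 : ENNReal.ofReal (r ^ β) * cylAvg d α r 0 0 g ≤ M := by
      rw [hM, maxFun]
      exact le_iSup₂ (f := fun ρ (_ : 0 < ρ) => ENNReal.ofReal (ρ ^ β) * cylAvg d α ρ 0 0 g) r hr
    have hrb0 : ENNReal.ofReal (r ^ β) ≠ 0 := (ENNReal.ofReal_pos.2 (Real.rpow_pos_of_pos hr β)).ne'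
    have h2 : cylAvg d α r 0 0 g ≤ (ENNReal.ofReal (r ^ β))⁻¹ * M := by
      calc cylAvg d α r 0 0 g
          = (ENNReal.ofReal (r ^ β))⁻¹ * (ENNReal.ofReal (r ^ β) * cylAvg d α r 0 0 g) := by
            rw [← mul_assoc, ENNReal.inv_mul_cancel hrb0 ENNReal.ofReal_ne_top, one_mul]
        _ ≤ _ := mul_le_mul_right h1 _
    have h3 : (∫⁻ z in cylP d α r 0 0, g z) = W * cylAvg d α r 0 0 g := by
      rw [cylAvg, ← mul_assoc, ← hW, ENNReal.mul_inv_cancel hW0 hWtop, one_mul]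
    rw [h3]
    calc W * cylAvg d α r 0 0 g ≤ W * ((ENNReal.ofReal (r ^ β))⁻¹ * M) := mul_le_mul_right h2 _
      _ = ENNReal.ofReal (r ^ (α + (d:ℝ) - β)) * (V * M) := by
          rw [hW, vol_cyl d α r hr.le]
          set R := ENNReal.ofReal r with hR
          have hR0 : R ≠ 0 := (ENNReal.ofReal_pos.2 hr).ne'
          have hRtop : R ≠ ∞ := ENNReal.ofReal_ne_top
          have e1 : ENNReal.ofReal (r ^ α) = R ^ α := (ENNReal.ofReal_rpow_of_pos hr).symm
          have e2 : ENNReal.ofReal (r ^ d) = R ^ (d:ℝ) := by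
            rw [ENNReal.rpow_natCast, hR, ← ENNReal.ofReal_pow hr.le]
          have e3 : (ENNReal.ofReal (r ^ β))⁻¹ = R ^ (-β) := by
            rw [← ENNReal.ofReal_rpow_of_pos hr, ← ENNReal.rpow_neg]
          have e4 : ENNReal.ofReal (r ^ (α + (d:ℝ) - β)) = R ^ (α + (d:ℝ) - β) :=
            (ENNReal.ofReal_rpow_of_pos hr).symm
          rw [e1, e2, e3, e4]
          rw [show R ^ α * (R ^ (d:ℝ) * V) * (R ^ (-β) * M)
              = R ^ α * R ^ (d:ℝ) * R ^ (-β) * (V * M) by ring]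
          rw [← ENNReal.rpow_add _ _ hR0 hRtop, ← ENNReal.rpow_add _ _ hR0 hRtop]
          rw [show α + (d:ℝ) + -β = α + (d:ℝ) - β by ring]
  -- step 3
  have step3 : ∀ u : ℝ, (∫⁻ z, F z u)
      ≤ (Ioi (ρ ^ α)).indicator
          (fun u => ENNReal.ofReal (u ^ (γ / 2 - β / α - 1)) * (V * M)) u := by
    intro u
    by_cases hu : ρ ^ α < u
    · have hu0 : 0 < u := hρα.trans hu
      set r := u ^ (1 / α) with hr_def
      have hr : 0 < r := Real.rpow_pos_of_pos hu0 _
      have hrα : r ^ α = u := by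
        rw [hr_def, ← Real.rpow_mul hu0.le, one_div, inv_mul_cancel₀ hα0.ne', Real.rpow_one]
      have hsub : ∀ z : ℝ × Spc d, z ∈ S → u ∈ Ioi z.1 → z ∈ cylP d α r 0 0 := by
        intro z hz hzu
        refine ⟨le_trans hρα.le hz.1, ?_, ?_⟩
        · rw [zero_add, hrα]; exact (mem_Ioi.1 hzu).le
        · rw [dist_zero_right]
          refine le_trans hz.2 ?_
          rw [hr_def]
          exact Real.rpow_le_rpow (le_trans hρα.le hz.1) (mem_Ioi.1 hzu).le (by positivity)
      have hFle : ∀ z, F z u ≤ h u * (cylP d α r 0 0).indicator g z := by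
        intro z
        simp only [hF]
        by_cases hz : z ∈ S
        · by_cases hzu : u ∈ Ioi z.1
          · rw [indicator_of_mem hz, indicator_of_mem hzu, indicator_of_mem (hsub z hz hzu),
              mul_comm]
          · rw [indicator_of_notMem hzu, mul_zero]; exact zero_le
        · rw [indicator_of_notMem hz, zero_mul]; exact zero_le
      calc (∫⁻ z, F z u) ≤ ∫⁻ z, h u * (cylP d α r 0 0).indicator g z := lintegral_mono hFle
        _ = h u * ∫⁻ z in cylP d α r 0 0, g z := by
            rw [lintegral_const_mul' _ _ (show h u ≠ ∞ from ENNReal.ofReal_ne_top),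
              lintegral_indicator (hcylmeas r)]
        _ ≤ h u * (ENNReal.ofReal (r ^ (α + (d:ℝ) - β)) * (V * M)) :=
            mul_le_mul_right (hcylbound r hr) _
        _ = (Ioi (ρ ^ α)).indicator
              (fun u => ENNReal.ofReal (u ^ (γ / 2 - β / α - 1)) * (V * M)) u := by
            rw [indicator_of_mem (mem_Ioi.2 hu)]
            rw [hh, ← mul_assoc, ← ENNReal.ofReal_mul (Real.rpow_nonneg hu0.le _)]
            congr 2
            rw [hr_def, ← Real.rpow_mul hu0.le, ← Real.rpow_add hu0]
            congr 1
            simp only [ha_def]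
            field_simp
            ring
    · have hz0 : ∀ z, F z u = 0 := by
        intro z; simp only [hF]
        by_cases hz : z ∈ S
        · have hnm : u ∉ Ioi z.1 := fun hmem => hu (lt_of_le_of_lt hz.1 (mem_Ioi.1 hmem))
          rw [indicator_of_notMem hnm, mul_zero]
        · rw [indicator_of_notMem hz, zero_mul]
      simp only [hz0, lintegral_zero]
      exact zero_le
  -- step 4 : conclude
  have hmeas2 : Measurable fun u : ℝ => ENNReal.ofReal (u ^ (γ / 2 - β / α - 1)) :=
    ENNReal.measurable_ofReal.comp (measurable_id.pow_const _)
  have hre : ∀ X Y Z W : ℝ≥0∞, X * (Y * (Z * W)) = X * Y * Z * W := fun X Y Z W => by ring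
  calc (∫⁻ z in S, ENNReal.ofReal (z.1 ^ (γ / 2 - (d:ℝ) / α - 1) * f z))
      = ENNReal.ofReal a * ∫⁻ u, ∫⁻ z, F z u := by rw [step1, step2]
    _ ≤ ENNReal.ofReal a * ∫⁻ u, (Ioi (ρ ^ α)).indicator
          (fun u => ENNReal.ofReal (u ^ (γ / 2 - β / α - 1)) * (V * M)) u :=
        mul_le_mul_right (lintegral_mono step3) _
    _ = ENNReal.ofReal a * ((∫⁻ u in Ioi (ρ ^ α),
          ENNReal.ofReal (u ^ (γ / 2 - β / α - 1))) * (V * M)) := by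
        rw [lintegral_indicator measurableSet_Ioi, lintegral_mul_const _ hmeas2]
    _ = ENNReal.ofReal (a * V.toReal * (β / α - γ / 2)⁻¹ * ρ ^ (α * γ / 2 - β)) * M := by
        rw [lint_Ioi_rpow hρα (by linarith : γ / 2 - β / α - 1 < -1)]
        rw [show γ / 2 - β / α - 1 + 1 = γ / 2 - β / α by ring]
        rw [show -(γ / 2 - β / α) = β / α - γ / 2 by ring]
        conv_lhs => rw [← ENNReal.ofReal_toReal hVtop, hre]
        rw [← ENNReal.ofReal_mul ha.le, ← ENNReal.ofReal_mul
          (mul_nonneg ha.le (div_nonneg (Real.rpow_nonneg hρα.le _) (by linarith)))]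
        congr 2
        rw [← Real.rpow_mul hρ.le]
        rw [show α * (γ / 2 - β / α) = α * γ / 2 - β by field_simp]
        rw [div_eq_mul_inv]
        ring
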